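/- Suppose f ∈ C²(ℝ^d) with ‖∇²f(x)‖ ≤ M for all x, and 0 < α < 1/M. Let x* = 0 be a strict saddle point of f with f(0) = 0 and all eigenvalues of ∇²f(0) nonzero. Let U₁ be a neighborhood of 0 and σ > 0 be such that ‖∇f(x)‖ ≥ σ‖x‖ for all x ∈ U₁, let ρ ∈ (0,1) satisfy ρM + Mρ²/2 < (ασ²/(2d))(1−ρ)², set U₂ := ⋃_{x : f(x)=0} B(x, ρ‖x‖) and S := U₁ ∩ U₂ ∩ f⁻¹([0,∞)). Then there exist a constant p > 0 and a neighborhood U of 0 such that f(x) ≥ p‖x‖² for every x ∈ (U ∩ f⁻¹([0,∞))) \ S. -/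

import Mathlib

open MeasureTheory Filter Topology

noncomputable section

open Set RealInnerProductSpace in
/-- Quadratic upper bound from a bound on the Hessian (with constant M instead of M/2,
which suffices for our purposes). -/
lemma rcgd_taylor_upper {E : Type*} [NormedAddCommGroup E] [InnerProductSpace ℝ E]
    [CompleteSpace E] (f : E → ℝ) (M : ℝ) (hf : ContDiff ℝ 2 f)
    (hM : ∀ x, ‖fderiv ℝ (gradient f) x‖ ≤ M) (x v : E) :
    f (x + v) ≤ f x + ⟪gradient f x, v⟫ + M * ‖v‖ ^ 2 := by
  have hfd : Differentiable ℝ f := hf.differentiable (by norm_num)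
  have hgd : Differentiable ℝ (gradient f) := by
    have h1 : ContDiff ℝ 1 (fderiv ℝ f) := hf.fderiv_right (by norm_num)
    have h2 : gradient f = fun y => (InnerProductSpace.toDual ℝ E).symm (fderiv ℝ f y) := rfl
    rw [h2]
    exact ((InnerProductSpace.toDual ℝ E).symm.toContinuousLinearEquiv.differentiable).comp
      (h1.differentiable (by norm_num))
  have lip : ∀ a b : E, ‖gradient f a - gradient f b‖ ≤ M * ‖a - b‖ := by
    intro a b
    exact (convex_univ).norm_image_sub_le_of_norm_fderiv_le
      (fun y _ => hgd y)
      (fun y _ => by simpa using hM y) (mem_univ b) (mem_univ a)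
  set g : ℝ → ℝ := fun t => f (x + t • v) with hg
  have hgderiv : ∀ t : ℝ, HasDerivAt g (⟪gradient f (x + t • v), v⟫) t := by
    intro t
    have hline : HasDerivAt (fun t : ℝ => x + t • v) v t := by
      simpa using ((hasDerivAt_id t).smul_const v).const_add x
    have hF : HasFDerivAt f (InnerProductSpace.toDual ℝ E (gradient f (x + t • v))) (x + t • v) :=
      (hfd (x + t • v)).hasGradientAt.hasFDerivAt
    exact (hF.comp_hasDerivAt t hline).congr_deriv (by simp)
  obtain ⟨c, hc, hc'⟩ := exists_hasDerivAt_eq_slope g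
    (fun t => ⟪gradient f (x + t • v), v⟫) (by norm_num : (0:ℝ) < 1)
    (fun t _ => (hgderiv t).continuousAt.continuousWithinAt)
    (fun t _ => hgderiv t)
  have h01 : g 1 - g 0 = ⟪gradient f (x + c • v), v⟫ := by
    rw [hc']; ring
  have key : ⟪gradient f (x + c • v), v⟫ ≤ ⟪gradient f x, v⟫ + M * ‖v‖ ^ 2 := by
    have : ⟪gradient f (x + c • v) - gradient f x, v⟫ ≤ M * ‖v‖ ^ 2 := by
      calc ⟪gradient f (x + c • v) - gradient f x, v⟫
          ≤ ‖gradient f (x + c • v) - gradient f x‖ * ‖v‖ := real_inner_le_norm _ _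
        _ ≤ (M * ‖x + c • v - x‖) * ‖v‖ := by
            have := lip (x + c • v) x
            have hv : (0:ℝ) ≤ ‖v‖ := norm_nonneg v
            nlinarith [norm_nonneg (gradient f (x + c • v) - gradient f x)]
        _ ≤ M * ‖v‖ ^ 2 := by
            have h1 : ‖x + c • v - x‖ = |c| * ‖v‖ := by
              simp [norm_smul, abs_of_nonneg]
            have hcle : |c| ≤ 1 := by
              rw [abs_le]; constructor <;> [linarith [hc.1]; linarith [hc.2]]
            have hM0 : 0 ≤ M := le_trans (norm_nonneg _) (hM x)
            rw [h1]
            nlinarith [norm_nonneg v, abs_nonneg c, sq_nonneg (‖v‖),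
              mul_nonneg hM0 (sq_nonneg ‖v‖)]
    have := inner_sub_left (𝕜 := ℝ) (gradient f (x + c • v)) (gradient f x) v
    linarith [this ▸ ‹⟪gradient f (x + c • v) - gradient f x, v⟫ ≤ M * ‖v‖ ^ 2›]
  have : g 1 ≤ g 0 + ⟪gradient f x, v⟫ + M * ‖v‖ ^ 2 := by linarith [h01 ▸ key]
  simpa [hg] using this

/-- The Hessian `∇²f(x)` of `f` at `x`, as a continuous linear map. -/
def hess (d : ℕ) (f : EuclideanSpace ℝ (Fin d) → ℝ) (x : EuclideanSpace ℝ (Fin d)) :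
    EuclideanSpace ℝ (Fin d) →L[ℝ] EuclideanSpace ℝ (Fin d) :=
  fderiv ℝ (gradient f) x

set_option maxHeartbeats 2000000 in
/-- Local quadratic lower bound: near the non-degenerate strict saddle point `0`, the function
`f` satisfies `f(x) ≥ p‖x‖²` on `(U ∩ f⁻¹([0,∞))) \ S`, where
`S = U₁ ∩ U₂ ∩ f⁻¹([0,∞))` and `U₂ = ⋃_{f(x) = 0} B(x, ρ‖x‖)`. -/
theorem rcgd_local_quadratic_growth
    {d : ℕ} (hd : 1 ≤ d) (f : EuclideanSpace ℝ (Fin d) → ℝ) (M α : ℝ)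
    (hf : ContDiff ℝ 2 f)
    (hM : ∀ x, ‖hess d f x‖ ≤ M)
    (hα : 0 < α) (hα' : α < 1 / M)
    (hcrit : gradient f 0 = 0) (hf0 : f 0 = 0)
    (hneg : ∃ μ < (0 : ℝ), Module.End.HasEigenvalue (hess d f 0).toLinearMap μ)
    (hnd : ∀ μ : ℝ, Module.End.HasEigenvalue (hess d f 0).toLinearMap μ → μ ≠ 0)
    (U₁ : Set (EuclideanSpace ℝ (Fin d))) (hU₁ : U₁ ∈ 𝓝 (0 : EuclideanSpace ℝ (Fin d)))
    (σ : ℝ) (hσ : 0 < σ)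
    (hgrad : ∀ x ∈ U₁, σ * ‖x‖ ≤ ‖gradient f x‖)
    (ρ : ℝ) (hρ0 : 0 < ρ) (hρ1 : ρ < 1)
    (hρ : ρ * M + M * ρ ^ 2 / 2 < (α * σ ^ 2 / (2 * d)) * (1 - ρ) ^ 2)
    (S : Set (EuclideanSpace ℝ (Fin d)))
    (hS : S = U₁ ∩ (⋃ x ∈ {x : EuclideanSpace ℝ (Fin d) | f x = 0}, Metric.ball x (ρ * ‖x‖)) ∩
      f ⁻¹' Set.Ici (0 : ℝ)) :
    ∃ p > (0 : ℝ), ∃ U ∈ 𝓝 (0 : EuclideanSpace ℝ (Fin d)),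
      ∀ x ∈ (U ∩ f ⁻¹' Set.Ici (0 : ℝ)) \ S, p * ‖x‖ ^ 2 ≤ f x := by
  -- M is positive
  have hM0 : 0 < M := by
    by_contra h
    push_neg at h
    have : (1 : ℝ) / M ≤ 0 := one_div_nonpos.mpr h
    linarith
  -- the relative-distance constant to the zero set
  set c : ℝ := ρ / (1 + ρ) with hc_def
  have hc0 : 0 < c := div_pos hρ0 (by linarith)
  -- the step size
  set s : ℝ := min (c / 2) (σ / (2 * M)) with hs_def
  have hs0 : 0 < s := lt_min (by linarith) (div_pos hσ (by linarith))
  have hs1 : s ≤ c / 2 := min_le_left _ _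
  have hs2 : M * s ≤ σ / 2 := by
    have := min_le_right (c / 2) (σ / (2 * M))
    calc M * s ≤ M * (σ / (2 * M)) := by nlinarith
      _ = σ / 2 := by field_simp
  clear hs_def
  clear_value s
  refine ⟨s * σ / 2, by positivity, U₁, hU₁, ?_⟩
  rintro x ⟨⟨hxU, hxf⟩, hxS⟩
  have hfx0 : (0 : ℝ) ≤ f x := hxf
  rcases eq_or_ne x 0 with rfl | hx0
  · simp [hf0]
  have hnx : 0 < ‖x‖ := norm_pos_iff.mpr hx0
  -- x is not in U₂
  have hnotU2 : x ∉ ⋃ y ∈ {y : EuclideanSpace ℝ (Fin d) | f y = 0},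
      Metric.ball y (ρ * ‖y‖) := by
    intro h
    exact hxS (hS ▸ ⟨⟨hxU, h⟩, hxf⟩)
  -- every zero of f is at relative distance at least c from x
  have hfar : ∀ y : EuclideanSpace ℝ (Fin d), f y = 0 → c * ‖x‖ ≤ ‖x - y‖ := by
    intro y hy
    have h1 : ρ * ‖y‖ ≤ dist x y := by
      by_contra hlt
      push_neg at hlt
      exact hnotU2 (Set.mem_biUnion hy (Metric.mem_ball.mpr hlt))
    rw [dist_eq_norm] at h1
    have h2 : ‖x‖ - ‖x - y‖ ≤ ‖y‖ := by
      have := norm_sub_norm_le x (x - y)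
      simpa using this
    rw [hc_def, div_mul_eq_mul_div, div_le_iff₀ (by linarith : (0:ℝ) < 1 + ρ)]
    nlinarith [norm_nonneg (x - y)]
  -- suppose for contradiction that f x < p ‖x‖²
  by_contra hcon
  push_neg at hcon
  -- the gradient at x is large
  have hgx : σ * ‖x‖ ≤ ‖gradient f x‖ := hgrad x hxU
  have hgxpos : 0 < ‖gradient f x‖ := lt_of_lt_of_le (by positivity) hgx
  -- step against the gradient
  set w : EuclideanSpace ℝ (Fin d) := -((s * ‖x‖ / ‖gradient f x‖) • gradient f x) with hw_def
  have hnw : ‖w‖ = s * ‖x‖ := by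
    rw [hw_def, norm_neg, norm_smul, Real.norm_eq_abs,
      abs_of_nonneg (by positivity : (0:ℝ) ≤ s * ‖x‖ / ‖gradient f x‖)]
    field_simp
  have hinner : (inner ℝ (gradient f x) w : ℝ) = -(s * ‖x‖ * ‖gradient f x‖) := by
    rw [hw_def, inner_neg_right, real_inner_smul_right, real_inner_self_eq_norm_sq]
    field_simp
  clear hw_def
  clear_value w
  have htaylor := rcgd_taylor_upper f M hf (fun z => hM z) x w
  have hfxw : f (x + w) < 0 := by
    have hi : (inner ℝ (gradient f x) w : ℝ) ≤ -(s * σ * ‖x‖ ^ 2) := by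
      rw [hinner]
      nlinarith [mul_le_mul_of_nonneg_left hgx (mul_nonneg hs0.le hnx.le)]
    have hMs : M * ‖w‖ ^ 2 ≤ s * σ / 2 * ‖x‖ ^ 2 := by
      rw [hnw]
      nlinarith [mul_le_mul_of_nonneg_right hs2
        (mul_nonneg hs0.le (sq_nonneg ‖x‖)), hs0.le, sq_nonneg ‖x‖]
    nlinarith [htaylor, hi, hMs, hcon]
  -- intermediate value theorem along the segment
  have hcont : ContinuousOn (fun t : ℝ => f (x + t • w)) (Set.Icc 0 1) :=
    ((hf.continuous).comp (continuous_const.add (continuous_id.smul continuous_const))).continuousOn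
  have hIVT := intermediate_value_Icc' (by norm_num : (0:ℝ) ≤ 1) hcont
  have h0mem : (0 : ℝ) ∈ Set.Icc (f (x + (1:ℝ) • w)) (f (x + (0:ℝ) • w)) := by
    constructor
    · simpa using hfxw.le
    · simpa using hfx0
  obtain ⟨t, ht, hft⟩ := hIVT h0mem
  -- the zero y = x + t • w is too close to x
  have hzero : f (x + t • w) = 0 := hft
  have hclose : ‖x - (x + t • w)‖ ≤ s * ‖x‖ := by
    have : ‖x - (x + t • w)‖ = |t| * ‖w‖ := by
      rw [show x - (x + t • w) = -(t • w) by abel, norm_neg, norm_smul, Real.norm_eq_abs]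
    rw [this, hnw]
    have ht1 : |t| ≤ 1 := by
      rw [abs_le]; exact ⟨by linarith [ht.1], ht.2⟩
    nlinarith [mul_le_mul_of_nonneg_right ht1 (mul_nonneg hs0.le hnx.le)]
  have hfarthis := hfar (x + t • w) hzero
  have h1 : s * ‖x‖ ≤ c / 2 * ‖x‖ := mul_le_mul_of_nonneg_right hs1 hnx.le
  nlinarith [hfarthis, hclose, h1, mul_pos hc0 hnx]
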